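/- Let I be an ideal of the multilinear polynomial ring, let T be a term irreducible modulo I, and let ρ be any partial assignment of some of the variables of T to values in the field such that the restricted term T|ρ is nonzero. Then T|ρ is also irreducible modulo I. -/
import Mathlib


attribute [local instance] Classical.propDecidable

/-- A literal is a variable together with a polarity (`true` = positive). -/
abbrev Clause (σ : Type) := Finset (σ × Bool)

/-- A CNF formula is a finite set of clauses. -/
abbrev CNF (σ : Type) := Finset (Clause σ)

/-- The variables occurring in a clause. -/
def clauseVars {σ : Type} [DecidableEq σ] (C : Clause σ) : Finset σ := C.image Prod.fst

/-- The variables occurring in a CNF formula. -/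
def cnfVars {σ : Type} [DecidableEq σ] (φ : CNF σ) : Finset σ := φ.sup clauseVars

/-- A (total) assignment satisfies a literal. -/
def litSat {σ : Type} (α : σ → Bool) (l : σ × Bool) : Prop := α l.1 = l.2

/-- A (total) assignment satisfies a clause. -/
def clauseSat {σ : Type} (α : σ → Bool) (C : Clause σ) : Prop := ∃ l ∈ C, litSat α l

/-- A (total) assignment satisfies a CNF formula. -/
def cnfSat {σ : Type} (α : σ → Bool) (φ : CNF σ) : Prop := ∀ C ∈ φ, clauseSat α C

/-- Multilinearization: replace every exponent by its minimum with `1`. -/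
noncomputable def mlin {σ 𝔽 : Type} [CommRing 𝔽] (p : MvPolynomial σ 𝔽) :
    MvPolynomial σ 𝔽 :=
  ∑ m ∈ p.support,
    MvPolynomial.monomial (Finsupp.mapRange (fun e => min e 1) (by simp) m) (p.coeff m)

/-- The polynomial translation of a clause: identifying true with `0`, the clause
`⋁_{x∈L⁺} x ∨ ⋁_{y∈L⁻} ¬y` becomes `∏_{x∈L⁺} x · ∏_{y∈L⁻} (1 - y)`. -/
noncomputable def clausePoly {σ : Type} (𝔽 : Type) [CommRing 𝔽] (C : Clause σ) :
    MvPolynomial σ 𝔽 :=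
  ∏ l ∈ C, if l.2 then MvPolynomial.X l.1 else 1 - MvPolynomial.X l.1
/-- An admissible total order on multilinear monomials (identified with finite sets of
variables): a strict linear order in which lower-degree monomials come first and which is
compatible with multiplication by monomials on disjoint sets of variables. -/
structure AdmissibleOrder (σ : Type) [DecidableEq σ] where
  lt : Finset σ → Finset σ → Prop
  irrefl : ∀ S, ¬ lt S S
  trans : ∀ {S T U : Finset σ}, lt S T → lt T U → lt S U
  total : ∀ S T, S ≠ T → lt S T ∨ lt T S
  degree_lt : ∀ S T : Finset σ, S.card < T.card → lt S T
  mul_lt : ∀ S T m : Finset σ, lt S T → Disjoint m (S ∪ T) → lt (m ∪ S) (m ∪ T)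

/-- `T` is the leading term of `Q` with respect to the admissible order `ord`. -/
def IsLeadTerm {σ 𝔽 : Type} [DecidableEq σ] [CommRing 𝔽] (ord : AdmissibleOrder σ)
    (Q T : MvPolynomial σ 𝔽) : Prop :=
  ∃ m ∈ Q.support, T = MvPolynomial.monomial m (Q.coeff m) ∧
    ∀ m' ∈ Q.support, m' ≠ m → ord.lt m'.support m.support

/-- A term `T` is reducible modulo a set `I` of polynomials if `T` is the leading term of
some member of `I`. -/
def Reducible {σ 𝔽 : Type} [DecidableEq σ] [CommRing 𝔽] (ord : AdmissibleOrder σ)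
    (I : Set (MvPolynomial σ 𝔽)) (T : MvPolynomial σ 𝔽) : Prop :=
  ∃ Q ∈ I, IsLeadTerm ord Q T

/-- `R` is the reduction of `P` modulo `I`: `R` is multilinear, `P - R ∈ I`, and every term
of `R` is irreducible modulo `I`. -/
def IsReduction {σ 𝔽 : Type} [DecidableEq σ] [CommRing 𝔽] (ord : AdmissibleOrder σ)
    (I : Set (MvPolynomial σ 𝔽)) (P R : MvPolynomial σ 𝔽) : Prop :=
  mlin R = R ∧ P - R ∈ I ∧
    ∀ m ∈ R.support, ¬ Reducible ord I (MvPolynomial.monomial m (R.coeff m))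

/-- The reduction operator `R_I` modulo `I` (well defined on multilinear polynomials when
`I` is an ideal of the multilinear ring). -/
noncomputable def redOp {σ 𝔽 : Type} [DecidableEq σ] [CommRing 𝔽] (ord : AdmissibleOrder σ)
    (I : Set (MvPolynomial σ 𝔽)) (P : MvPolynomial σ 𝔽) : MvPolynomial σ 𝔽 :=
  if h : ∃ R, IsReduction ord I P R then h.choose else 0

/-- A subset of the multilinear polynomial ring is an ideal of that ring: it consists of
multilinear polynomials, contains `0`, and is closed under addition and under multiplication
(followed by multilinearization) by arbitrary polynomials. -/
def IsMLIdeal {σ 𝔽 : Type} [CommRing 𝔽] (I : Set (MvPolynomial σ 𝔽)) : Prop :=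
  0 ∈ I ∧ (∀ p ∈ I, mlin p = p) ∧ (∀ p ∈ I, ∀ q ∈ I, p + q ∈ I) ∧
    (∀ p ∈ I, ∀ q : MvPolynomial σ 𝔽, mlin (q * p) ∈ I)

/-- The multilinear (squarefree) monomial with support `m`. -/
noncomputable def monoOf {σ : Type} [DecidableEq σ] (m : Finset σ) : σ →₀ ℕ :=
  ∑ x ∈ m, Finsupp.single x 1


section Aux

variable {σ : Type} [DecidableEq σ]

lemma monoOf_apply (F : Finset σ) (x : σ) : monoOf F x = if x ∈ F then 1 else 0 := by
  classical
  simp [monoOf, Finsupp.finset_sum_apply, Finsupp.single_apply, Finset.sum_ite_eq]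

lemma monoOf_support (F : Finset σ) : (monoOf F).support = F := by
  classical
  ext x
  simp only [Finsupp.mem_support_iff, monoOf_apply]
  by_cases hx : x ∈ F <;> simp [hx]

lemma sq_add (D : Finset σ) (m : σ →₀ ℕ) :
    Finsupp.mapRange (fun e => min e 1) (by simp) (monoOf D + m) = monoOf (D ∪ m.support) := by
  classical
  ext x
  rw [Finsupp.mapRange_apply]
  simp only [Finsupp.add_apply, monoOf_apply, Finset.mem_union, Finsupp.mem_support_iff]
  by_cases hx : x ∈ D <;> by_cases hm : m x = 0 <;> simp [hx, hm] <;> try omega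

lemma ord_asymm (ord : AdmissibleOrder σ) {A B : Finset σ} (h : ord.lt A B) : ¬ ord.lt B A :=
  fun h' => ord.irrefl A (ord.trans h h')

lemma ord_card_le (ord : AdmissibleOrder σ) {A B : Finset σ} (h : ord.lt A B) :
    A.card ≤ B.card := by
  by_contra hc
  exact ord_asymm ord h (ord.degree_lt _ _ (by omega))

lemma ord_key (ord : AdmissibleOrder σ) {D M E : Finset σ} (hlt : ord.lt M E)
    (hDE : Disjoint D E) : ord.lt (D ∪ M) (D ∪ E) := by
  classical
  have hME : M.card ≤ E.card := ord_card_le ord hlt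
  by_cases hcase : (M \ D).card < E.card
  · apply ord.degree_lt
    have h1 : D ∪ M = D ∪ (M \ D) := (Finset.union_sdiff_self_eq_union).symm
    have h2 : (D ∪ (M \ D)).card = D.card + (M \ D).card :=
      Finset.card_union_of_disjoint Finset.disjoint_sdiff
    have h3 : (D ∪ E).card = D.card + E.card := Finset.card_union_of_disjoint hDE
    rw [h1, h2, h3]
    omega
  · push_neg at hcase
    have hsub : M \ D ⊆ M := Finset.sdiff_subset
    have hle : M.card ≤ (M \ D).card := le_trans hME hcase
    have hMD : M \ D = M := Finset.eq_of_subset_of_card_le hsub hle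
    have hdisj : Disjoint D M :=
      (Finset.sdiff_eq_self_iff_disjoint.mp hMD).symm
    exact ord.mul_lt M E D hlt (Finset.disjoint_union_right.mpr ⟨hdisj, hDE⟩)

omit [DecidableEq σ] in
lemma mlin_eq_sum_superset {𝔽 : Type} [CommRing 𝔽] (p : MvPolynomial σ 𝔽) (s : Finset (σ →₀ ℕ))
    (h : p.support ⊆ s) :
    mlin p = ∑ m ∈ s,
      MvPolynomial.monomial (Finsupp.mapRange (fun e => min e 1) (by simp) m) (p.coeff m) := by
  classical
  unfold mlin
  refine Finset.sum_subset h ?_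
  intro m _ hm
  rw [MvPolynomial.notMem_support_iff] at hm
  simp [hm]

lemma mlin_monomial_mul {𝔽 : Type} [CommRing 𝔽] (D : Finset σ) (c : 𝔽) (p : MvPolynomial σ 𝔽) :
    mlin (MvPolynomial.monomial (monoOf D) c * p) =
      ∑ m ∈ p.support, MvPolynomial.monomial (monoOf (D ∪ m.support)) (c * p.coeff m) := by
  classical
  have hsupp : (MvPolynomial.monomial (monoOf D) c * p).support ⊆
      p.support.image (monoOf D + ·) := by
    refine (MvPolynomial.support_mul _ _).trans ?_
    intro x hx
    rw [Finset.mem_add] at hx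
    obtain ⟨y, hy, z, hz, rfl⟩ := hx
    have hy' : y = monoOf D := by
      have := MvPolynomial.support_monomial_subset hy
      simpa using this
    exact Finset.mem_image.mpr ⟨z, hz, by rw [hy']⟩
  rw [mlin_eq_sum_superset _ _ hsupp,
    Finset.sum_image (by intro x _ y _ h; exact add_left_cancel h)]
  refine Finset.sum_congr rfl ?_
  intro m hm
  rw [sq_add, MvPolynomial.coeff_monomial_mul]

end Aux

/-- if the term `T = a·∏_{x∈S} x` is irreducible modulo an ideal `I` of the
multilinear ring, and `ρ` is a partial assignment to a subset `D ⊆ S` of the variables of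
`T` such that the restricted term `T|ρ = (a·∏_{x∈D} ρ(x))·∏_{x∈S∖D} x` is nonzero, then
`T|ρ` is also irreducible modulo `I`. -/
theorem stmt3 {𝔽 σ : Type} [Field 𝔽] [Fintype σ] [DecidableEq σ]
    (ord : AdmissibleOrder σ) (I : Set (MvPolynomial σ 𝔽)) (hI : IsMLIdeal I)
    (a : 𝔽) (ha : a ≠ 0) (S : Finset σ)
    (hirr : ¬ Reducible ord I (MvPolynomial.monomial (monoOf S) a))
    (D : Finset σ) (hD : D ⊆ S) (ρ : σ → 𝔽)
    (hnz : a * ∏ x ∈ D, ρ x ≠ 0) :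
    ¬ Reducible ord I (MvPolynomial.monomial (monoOf (S \ D)) (a * ∏ x ∈ D, ρ x)) := by
  classical
  set b := a * ∏ x ∈ D, ρ x with hb
  set E := S \ D with hE
  rintro ⟨Q, hQ, m₀, hm₀s, hTeq, hmax⟩
  have hDE : Disjoint D E := Finset.disjoint_sdiff
  have hDES : D ∪ E = S := Finset.union_sdiff_of_subset hD
  have hm₀ : m₀ = monoOf E ∧ b = Q.coeff m₀ := by
    rcases (MvPolynomial.monomial_eq_monomial_iff _ _ _ _).mp hTeq with ⟨h1, h2⟩ | ⟨h1, h2⟩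
    · exact ⟨h1.symm, h2⟩
    · exact absurd h1 hnz
  obtain ⟨hm₀E, hcoeff⟩ := hm₀
  have hm₀supp : m₀.support = E := by rw [hm₀E, monoOf_support]
  apply hirr
  set c := a * b⁻¹ with hc
  set Q' := mlin (MvPolynomial.monomial (monoOf D) c * Q) with hQ'
  have hQ'I : Q' ∈ I := hI.2.2.2 Q hQ _
  have hQ'eq : Q' = ∑ m ∈ Q.support,
      MvPolynomial.monomial (monoOf (D ∪ m.support)) (c * Q.coeff m) :=
    mlin_monomial_mul D c Q
  have hcoeffQ' : ∀ μ, Q'.coeff μ =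
      ∑ m ∈ Q.support, if monoOf (D ∪ m.support) = μ then c * Q.coeff m else 0 := by
    intro μ
    rw [hQ'eq, MvPolynomial.coeff_sum]
    refine Finset.sum_congr rfl fun m _ => MvPolynomial.coeff_monomial _ _ _
  -- key: for m in Q.support with m ≠ m₀, D ∪ m.support ≠ S
  have hkey : ∀ m ∈ Q.support, m ≠ m₀ → D ∪ m.support ≠ S := by
    intro m hm hne heq
    have hlt := hmax m hm hne
    rw [hm₀supp] at hlt
    have := ord_key ord hlt hDE
    rw [heq, hDES] at this
    exact ord.irrefl S this
  have htop : Q'.coeff (monoOf S) = a := by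
    rw [hcoeffQ']
    rw [Finset.sum_eq_single m₀]
    · have : D ∪ m₀.support = S := by rw [hm₀supp, hDES]
      rw [if_pos (by rw [this]), ← hcoeff, hc]
      field_simp
    · intro m hm hne
      rw [if_neg]
      intro heq
      have : D ∪ m.support = S := by
        have := congrArg Finsupp.support heq
        rwa [monoOf_support, monoOf_support] at this
      exact hkey m hm hne this
    · intro h; exact absurd hm₀s h
  have hmem : monoOf S ∈ Q'.support := by
    rw [MvPolynomial.mem_support_iff, htop]; exact ha
  refine ⟨Q', hQ'I, monoOf S, hmem, ?_, ?_⟩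
  · rw [htop]
  · intro μ hμ hne
    rw [MvPolynomial.mem_support_iff, hcoeffQ'] at hμ
    have : ∃ m ∈ Q.support, monoOf (D ∪ m.support) = μ := by
      by_contra hcon
      push_neg at hcon
      exact hμ (Finset.sum_eq_zero fun m hm => if_neg (hcon m hm))
    obtain ⟨m, hm, rfl⟩ := this
    rw [monoOf_support, monoOf_support]
    have hmne : m ≠ m₀ := by
      rintro rfl
      rw [hm₀supp, hDES] at hne
      exact hne rfl
    have hlt := hmax m hm hmne
    rw [hm₀supp] at hlt
    have := ord_key ord hlt hDE
    rwa [hDES] at this
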